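/- Let A be a unital C*-algebra and L₁, L₂, V, ζ, w₁, w₂ ∈ A with V self-adjoint, μ ∈ A central, satisfying: (i) [V, L₂] = w₁[V,ζ] + μ w₂; (ii) L₂* L₂ ≤ γ^{-2} ζ* ζ + δ₁; (iii) w₁* w₁ ≤ δ₂; (iv) w₂* w₂ ≤ δ₃, where γ > 0, δ₁, δ₂, δ₃ ≥ 0. Then for any τ₁,…,τ₅ > 0, the generator-type expression (1/2)(L₁+L₂)*[V,L₁+L₂] + (1/2)[V,L₁+L₂]*(L₁+L₂) is bounded above by L_{L₁}(V) + (τ₁²/2 + τ₂²/2) L₁* L₁ + (δ₂/(2τ₁²) + δ₂/(2τ₄²)) [V,ζ]*[V,ζ] + ((τ₃² + τ₄² + τ₅²)/(2γ²)) ζ* ζ + (1/(2τ₃²)) [V,L₁]*[V,L₁] + (δ₃/(2τ₂²) + δ₃/(2τ₅²)) μ* μ + ((τ₃² + τ₄² + τ₅²)/2) δ₁, where L_{L₁}(V) = (1/2)L₁*[V,L₁] + (1/2)[V,L₁]* L₁. -/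

import Mathlib

section Aux

variable {A : Type*} [NormedRing A] [StarRing A] [CStarRing A]
    [NormedAlgebra ℝ A] [PartialOrder A] [StarOrderedRing A]

omit [PartialOrder A] [StarOrderedRing A] in
theorem stmt9_real_star_smul (r : ℝ) (a : A) : star (r • a) = r • star a :=
  (AddMonoidHom.toRealLinearMap (starAddEquiv (R := A)).toAddMonoidHom
    continuous_star).map_smul r a

theorem stmt9_smul_nonneg (r : ℝ) (hr : 0 ≤ r) {a : A} (h : 0 ≤ a) : 0 ≤ r • a := by
  have key : r • a = star ((Real.sqrt r) • (1:A)) * a * ((Real.sqrt r) • (1:A)) := by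
    rw [stmt9_real_star_smul, star_one, smul_mul_assoc, mul_smul_comm, one_mul, mul_one,
      smul_smul, Real.mul_self_sqrt hr]
  rw [key]
  exact star_left_conjugate_nonneg h _

theorem stmt9_smul_mono (r : ℝ) (hr : 0 ≤ r) {a b : A} (h : a ≤ b) : r • a ≤ r • b := by
  rw [← sub_nonneg] at h ⊢
  rw [← smul_sub]
  exact stmt9_smul_nonneg r hr h

theorem stmt9_half_bound (x y : A) (t : ℝ) (ht : 0 < t) :
    (1/2:ℝ) • (star x * y + star y * x) ≤
      (t^2/2) • (star x * x) + (1/(2*t^2)) • (star y * y) := by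
  have ht' : t ≠ 0 := ht.ne'
  have h0 := star_mul_self_nonneg (t • x - t⁻¹ • y)
  have hexp : star (t • x - t⁻¹ • y) * (t • x - t⁻¹ • y)
      = (t^2) • (star x * x) + (t^2)⁻¹ • (star y * y) - (star x * y + star y * x) := by
    simp only [star_sub, stmt9_real_star_smul, sub_mul, mul_sub, smul_mul_assoc,
      mul_smul_comm, smul_smul]
    match_scalars <;> field_simp <;> ring
  rw [hexp] at h0
  have h3 : star x * y + star y * x ≤ (t^2) • (star x * x) + (t^2)⁻¹ • (star y * y) :=
    sub_nonneg.mp h0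
  calc (1/2:ℝ) • (star x * y + star y * x)
      ≤ (1/2:ℝ) • ((t^2) • (star x * x) + (t^2)⁻¹ • (star y * y)) :=
        stmt9_smul_mono _ (by norm_num) h3
    _ = (t^2/2) • (star x * x) + (1/(2*t^2)) • (star y * y) := by
        match_scalars <;> field_simp <;> ring

end Aux

/-- Key estimate in the proof of Theorem 2: given the commutator
decomposition `[V, L₂] = w₁[V,ζ] + μ w₂` with `μ` central and the sector
bounds, the generator-type expression
`(1/2)(L₁+L₂)*[V,L₁+L₂] + (1/2)[V,L₁+L₂]*(L₁+L₂)` is bounded above by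
`L_{L₁}(V) + (τ₁²/2 + τ₂²/2) L₁* L₁ + (δ₂/(2τ₁²) + δ₂/(2τ₄²)) [V,ζ]*[V,ζ]
 + ((τ₃²+τ₄²+τ₅²)/(2γ²)) ζ* ζ + (1/(2τ₃²)) [V,L₁]*[V,L₁]
 + (δ₃/(2τ₂²) + δ₃/(2τ₅²)) μ* μ + ((τ₃²+τ₄²+τ₅²)/2) δ₁`. -/
theorem stmt9 {A : Type*} [NormedRing A] [StarRing A] [CStarRing A]
    [NormedAlgebra ℝ A] [PartialOrder A] [StarOrderedRing A]
    (L₁ L₂ V ζ w₁ w₂ μ : A) (γ δ₁ δ₂ δ₃ : ℝ)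
    (hV : star V = V)
    (hμcentral : ∀ a : A, μ * a = a * μ)
    (hdecomp : V * L₂ - L₂ * V = w₁ * (V * ζ - ζ * V) + μ * w₂)
    (hγ : 0 < γ) (hδ₁ : 0 ≤ δ₁) (hδ₂ : 0 ≤ δ₂) (hδ₃ : 0 ≤ δ₃)
    (hL₂ : star L₂ * L₂ ≤ (γ ^ 2)⁻¹ • (star ζ * ζ) + δ₁ • (1 : A))
    (hw₁ : star w₁ * w₁ ≤ δ₂ • (1 : A))
    (hw₂ : star w₂ * w₂ ≤ δ₃ • (1 : A)) :
    ∀ τ₁ τ₂ τ₃ τ₄ τ₅ : ℝ, 0 < τ₁ → 0 < τ₂ → 0 < τ₃ → 0 < τ₄ → 0 < τ₅ →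
      ((1 : ℝ) / 2) • (star (L₁ + L₂) * (V * (L₁ + L₂) - (L₁ + L₂) * V))
        + ((1 : ℝ) / 2) • (star (V * (L₁ + L₂) - (L₁ + L₂) * V) * (L₁ + L₂)) ≤
      (((1 : ℝ) / 2) • (star L₁ * (V * L₁ - L₁ * V))
          + ((1 : ℝ) / 2) • (star (V * L₁ - L₁ * V) * L₁))
        + (τ₁ ^ 2 / 2 + τ₂ ^ 2 / 2) • (star L₁ * L₁)
        + (δ₂ / (2 * τ₁ ^ 2) + δ₂ / (2 * τ₄ ^ 2)) •
            (star (V * ζ - ζ * V) * (V * ζ - ζ * V))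
        + ((τ₃ ^ 2 + τ₄ ^ 2 + τ₅ ^ 2) / (2 * γ ^ 2)) • (star ζ * ζ)
        + (1 / (2 * τ₃ ^ 2)) • (star (V * L₁ - L₁ * V) * (V * L₁ - L₁ * V))
        + (δ₃ / (2 * τ₂ ^ 2) + δ₃ / (2 * τ₅ ^ 2)) • (star μ * μ)
        + ((τ₃ ^ 2 + τ₄ ^ 2 + τ₅ ^ 2) / 2 * δ₁) • (1 : A) := by
  intro τ₁ τ₂ τ₃ τ₄ τ₅ hτ₁ hτ₂ hτ₃ hτ₄ hτ₅
  set B : A := V * L₁ - L₁ * V with hB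
  set C : A := V * ζ - ζ * V with hC
  -- centrality of star μ
  have hμ' : ∀ a : A, star μ * a = a * star μ := by
    intro a
    calc star μ * a = star (star a * μ) := by rw [star_mul, star_star]
      _ = star (μ * star a) := by rw [hμcentral (star a)]
      _ = a * star μ := by rw [star_mul, star_star]
  -- commutator of V with the sum splits
  have hBD : V * (L₁ + L₂) - (L₁ + L₂) * V = B + (w₁ * C + μ * w₂) := by
    rw [← hdecomp, hB]; noncomm_ring
  -- decomposition of the left-hand side
  have hsplit :
      ((1 : ℝ) / 2) • (star (L₁ + L₂) * (V * (L₁ + L₂) - (L₁ + L₂) * V))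
        + ((1 : ℝ) / 2) • (star (V * (L₁ + L₂) - (L₁ + L₂) * V) * (L₁ + L₂))
      = (((1 : ℝ) / 2) • (star L₁ * B) + ((1 : ℝ) / 2) • (star B * L₁))
        + ((1/2:ℝ) • (star L₁ * (w₁ * C) + star (w₁ * C) * L₁)
          + (1/2:ℝ) • (star L₁ * (μ * w₂) + star (μ * w₂) * L₁)
          + (1/2:ℝ) • (star L₂ * B + star B * L₂)
          + (1/2:ℝ) • (star L₂ * (w₁ * C) + star (w₁ * C) * L₂)
          + (1/2:ℝ) • (star L₂ * (μ * w₂) + star (μ * w₂) * L₂)) := by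
    rw [hBD]
    simp only [star_add, add_mul, mul_add, smul_add]
    abel
  -- bound on star(w₁*C)*(w₁*C)
  have hw₁C : star (w₁ * C) * (w₁ * C) ≤ δ₂ • (star C * C) := by
    have h := star_left_conjugate_le_conjugate hw₁ C
    have e1 : star (w₁ * C) * (w₁ * C) = star C * (star w₁ * w₁) * C := by
      rw [star_mul]; noncomm_ring
    have e2 : star C * (δ₂ • (1:A)) * C = δ₂ • (star C * C) := by
      simp [mul_smul_comm, smul_mul_assoc]
    rw [e1, ← e2]; exact h
  -- bound on star(μ*w₂)*(μ*w₂)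
  have hμw₂ : star (μ * w₂) * (μ * w₂) ≤ δ₃ • (star μ * μ) := by
    have h := star_left_conjugate_le_conjugate hw₂ μ
    have e1 : star (μ * w₂) * (μ * w₂) = star μ * (star w₂ * w₂) * μ := by
      rw [star_mul, hμcentral w₂, ← hμ' (star w₂)]; noncomm_ring
    have e2 : star μ * (δ₃ • (1:A)) * μ = δ₃ • (star μ * μ) := by
      simp [mul_smul_comm, smul_mul_assoc]
    rw [e1, ← e2]; exact h
  -- the five cross-term bounds
  have b1 : (1/2:ℝ) • (star L₁ * (w₁ * C) + star (w₁ * C) * L₁)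
      ≤ (τ₁^2/2) • (star L₁ * L₁) + (δ₂/(2*τ₁^2)) • (star C * C) := by
    refine (stmt9_half_bound L₁ (w₁ * C) τ₁ hτ₁).trans ?_
    gcongr (τ₁^2/2) • (star L₁ * L₁) + ?_
    calc (1/(2*τ₁^2)) • (star (w₁ * C) * (w₁ * C))
        ≤ (1/(2*τ₁^2)) • (δ₂ • (star C * C)) :=
          stmt9_smul_mono _ (by positivity) hw₁C
      _ = (δ₂/(2*τ₁^2)) • (star C * C) := by rw [smul_smul]; congr 1; ring
  have b2 : (1/2:ℝ) • (star L₁ * (μ * w₂) + star (μ * w₂) * L₁)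
      ≤ (τ₂^2/2) • (star L₁ * L₁) + (δ₃/(2*τ₂^2)) • (star μ * μ) := by
    refine (stmt9_half_bound L₁ (μ * w₂) τ₂ hτ₂).trans ?_
    gcongr (τ₂^2/2) • (star L₁ * L₁) + ?_
    calc (1/(2*τ₂^2)) • (star (μ * w₂) * (μ * w₂))
        ≤ (1/(2*τ₂^2)) • (δ₃ • (star μ * μ)) :=
          stmt9_smul_mono _ (by positivity) hμw₂
      _ = (δ₃/(2*τ₂^2)) • (star μ * μ) := by rw [smul_smul]; congr 1; ring
  have hL₂bd : ∀ t : ℝ, 0 < t → (t^2/2) • (star L₂ * L₂)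
      ≤ (t^2/(2*γ^2)) • (star ζ * ζ) + (t^2/2*δ₁) • (1:A) := by
    intro t ht
    calc (t^2/2) • (star L₂ * L₂)
        ≤ (t^2/2) • ((γ ^ 2)⁻¹ • (star ζ * ζ) + δ₁ • (1 : A)) :=
          stmt9_smul_mono _ (by positivity) hL₂
      _ = (t^2/(2*γ^2)) • (star ζ * ζ) + (t^2/2*δ₁) • (1:A) := by
          rw [smul_add, smul_smul, smul_smul]
          congr 2 <;> ring
  have b3 : (1/2:ℝ) • (star L₂ * B + star B * L₂)
      ≤ ((τ₃^2/(2*γ^2)) • (star ζ * ζ) + (τ₃^2/2*δ₁) • (1:A))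
        + (1/(2*τ₃^2)) • (star B * B) := by
    refine (stmt9_half_bound L₂ B τ₃ hτ₃).trans ?_
    exact add_le_add_left (hL₂bd τ₃ hτ₃) _
  have b4 : (1/2:ℝ) • (star L₂ * (w₁ * C) + star (w₁ * C) * L₂)
      ≤ ((τ₄^2/(2*γ^2)) • (star ζ * ζ) + (τ₄^2/2*δ₁) • (1:A))
        + (δ₂/(2*τ₄^2)) • (star C * C) := by
    refine (stmt9_half_bound L₂ (w₁ * C) τ₄ hτ₄).trans ?_
    refine add_le_add (hL₂bd τ₄ hτ₄) ?_
    calc (1/(2*τ₄^2)) • (star (w₁ * C) * (w₁ * C))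
        ≤ (1/(2*τ₄^2)) • (δ₂ • (star C * C)) :=
          stmt9_smul_mono _ (by positivity) hw₁C
      _ = (δ₂/(2*τ₄^2)) • (star C * C) := by rw [smul_smul]; congr 1; ring
  have b5 : (1/2:ℝ) • (star L₂ * (μ * w₂) + star (μ * w₂) * L₂)
      ≤ ((τ₅^2/(2*γ^2)) • (star ζ * ζ) + (τ₅^2/2*δ₁) • (1:A))
        + (δ₃/(2*τ₅^2)) • (star μ * μ) := by
    refine (stmt9_half_bound L₂ (μ * w₂) τ₅ hτ₅).trans ?_
    refine add_le_add (hL₂bd τ₅ hτ₅) ?_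
    calc (1/(2*τ₅^2)) • (star (μ * w₂) * (μ * w₂))
        ≤ (1/(2*τ₅^2)) • (δ₃ • (star μ * μ)) :=
          stmt9_smul_mono _ (by positivity) hμw₂
      _ = (δ₃/(2*τ₅^2)) • (star μ * μ) := by rw [smul_smul]; congr 1; ring
  rw [hsplit]
  have hsum := add_le_add (add_le_add (add_le_add (add_le_add b1 b2) b3) b4) b5
  refine (add_le_add_right hsum _).trans_eq ?_
  match_scalars <;> ring
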